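/- Let P be a tripartite box with binary outputs a,b ∈ {0,1} for Alice and Bob, inputs x,y ∈ {1,…,m} (m ≥ 2), and finite input set Z and output set C for Eve, and suppose P satisfies the full tripartite no-signaling constraints (the marginal output distribution of every subset of parties is independent of the inputs of the complementary set of parties). Let I := Σ_{(x,y): x=y or x=y+1} P_{AB}(a⊕b=1|x,y) + P_{AB}(a⊕b=0|1,m) be the chained Bell expression of the Alice–Bob marginal. Then: (1) for all x, y, z, D( P_{A,C|x,y,z}, Pᵘ_A × P_{C|z} ) ≤ I/2, where Pᵘ_A(a) = 1/2 and P_{C|z} is Eve's marginal; and (2) for all a ∈ {0,1}, x, y, z with P_{A|X}(a|x) > 0, D( P_{C|x,y,z,a}, P_{C|z} ) ≤ I, where P_{C|x,y,z,a}(c) = (Σ_b P(a,b,c|x,y,z))/P_{A|X}(a|x). -/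

import Mathlib

open Finset

def Jfun (m : ℕ) (hm : 2 ≤ m) {Z C : Type*} [Fintype C]
    (P : Fin m → Fin m → Z → Bool → Bool → C → ℝ) (z : Z) (c : C) : ℝ :=
  (∑ p ∈ Finset.univ.filter
      (fun p : Fin m × Fin m => p.1 = p.2 ∨ p.1.val = p.2.val + 1),
    (P p.1 p.2 z true false c + P p.1 p.2 z false true c))
  + (P ⟨0, Nat.lt_of_lt_of_le Nat.zero_lt_two hm⟩ ⟨m - 1, Nat.sub_lt (Nat.lt_of_lt_of_le Nat.zero_lt_two hm) Nat.one_pos⟩ z true true c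
     + P ⟨0, Nat.lt_of_lt_of_le Nat.zero_lt_two hm⟩ ⟨m - 1, Nat.sub_lt (Nat.lt_of_lt_of_le Nat.zero_lt_two hm) Nat.one_pos⟩ z false false c)

lemma chain_bound (m : ℕ) (hm : 0 < m) (a b : ℕ → ℝ) (eD eO : ℕ → ℝ) (f N : ℝ)
    (h1 : ∀ j, j < m → |a j - b j| ≤ eD j)
    (h2 : ∀ j, j + 1 < m → |a (j+1) - b j| ≤ eO j)
    (h3 : |a 0 + b (m-1) - N| ≤ f) :
    ∀ x, x < m → |2 * a x - N| ≤
      (∑ j ∈ Finset.range m, eD j) + (∑ j ∈ Finset.range (m-1), eO j) + f := by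
  have claim1 : ∀ k, k < m → |a k - a 0| ≤ ∑ j ∈ Finset.range k, (eD j + eO j) := by
    intro k
    induction k with
    | zero => intro _; simp
    | succ k ih =>
      intro hk
      have hk' : k < m := by omega
      have hk2 : k + 1 < m := hk
      calc |a (k+1) - a 0|
          = |(a (k+1) - b k) - (a k - b k) + (a k - a 0)| := by ring_nf
        _ ≤ |(a (k+1) - b k) - (a k - b k)| + |a k - a 0| := abs_add_le _ _
        _ ≤ |a (k+1) - b k| + |a k - b k| + |a k - a 0| := by
              have := abs_sub (a (k+1) - b k) (a k - b k)
              linarith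
        _ ≤ eO k + eD k + ∑ j ∈ Finset.range k, (eD j + eO j) := by
              have := h1 k hk'; have := h2 k hk2; have := ih hk'
              linarith
        _ = ∑ j ∈ Finset.range (k+1), (eD j + eO j) := by
              rw [Finset.sum_range_succ]; ring
  have claim2 : ∀ d, d < m → |a (m-1-d) - b (m-1)| ≤
      (∑ j ∈ Finset.Ico (m-1-d) m, eD j) + ∑ j ∈ Finset.Ico (m-1-d) (m-1), eO j := by
    intro d
    induction d with
    | zero =>
      intro _
      simp only [Nat.sub_zero]
      have : Finset.Ico (m-1) m = {m-1} := by
        rw [show m = (m-1)+1 by omega]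
        simp
      rw [this]
      simp only [Finset.sum_singleton, Finset.Ico_self, Finset.sum_empty, add_zero]
      exact h1 (m-1) (by omega)
    | succ d ih =>
      intro hd
      have hd' : d < m := by omega
      set k := m - 1 - (d+1) with hkdef
      have hk1 : m - 1 - d = k + 1 := by omega
      have hkm : k + 1 < m := by omega
      have e1 : |a k - b (m-1)| ≤ |a k - b k| + |a (k+1) - b k| + |a (k+1) - b (m-1)| := by
        have h := abs_add_le ((a k - b k) - (a (k+1) - b k)) (a (k+1) - b (m-1))
        have h' : (a k - b k) - (a (k+1) - b k) + (a (k+1) - b (m-1)) = a k - b (m-1) := by ring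
        rw [h'] at h
        have := abs_sub (a k - b k) (a (k+1) - b k)
        linarith
      have ih' := ih hd'
      rw [hk1] at ih'
      have s1 : ∑ j ∈ Finset.Ico k m, eD j = eD k + ∑ j ∈ Finset.Ico (k+1) m, eD j :=
        Finset.sum_eq_sum_Ico_succ_bot (by omega) _
      have s2 : ∑ j ∈ Finset.Ico k (m-1), eO j = eO k + ∑ j ∈ Finset.Ico (k+1) (m-1), eO j :=
        Finset.sum_eq_sum_Ico_succ_bot (by omega) _
      rw [s1, s2]
      have := h1 k (by omega); have := h2 k hkm
      linarith
  intro x hx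
  have c1 := claim1 x hx
  have c2 := claim2 (m-1-x) (by omega)
  have hxx : m - 1 - (m-1-x) = x := by omega
  rw [hxx] at c2
  have key : |2 * a x - N| ≤ |a x - a 0| + |a x - b (m-1)| + |a 0 + b (m-1) - N| := by
    have h := abs_add_le ((a x - a 0) + (a x - b (m-1))) (a 0 + b (m-1) - N)
    have h' : ((a x - a 0) + (a x - b (m-1))) + (a 0 + b (m-1) - N) = 2 * a x - N := by ring
    rw [h'] at h
    have := abs_add_le (a x - a 0) (a x - b (m-1))
    linarith
  have split1 : ∑ j ∈ Finset.range x, eD j + ∑ j ∈ Finset.Ico x m, eD j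
      = ∑ j ∈ Finset.range m, eD j := by
    rw [Finset.range_eq_Ico, Finset.range_eq_Ico]
    exact Finset.sum_Ico_consecutive eD (by omega : 0 ≤ x) (by omega : x ≤ m)
  have split2 : ∑ j ∈ Finset.range x, eO j + ∑ j ∈ Finset.Ico x (m-1), eO j
      = ∑ j ∈ Finset.range (m-1), eO j := by
    rw [Finset.range_eq_Ico, Finset.range_eq_Ico]
    exact Finset.sum_Ico_consecutive eO (by omega : 0 ≤ x) (by omega : x ≤ m - 1)
  have c1' : |a x - a 0| ≤ ∑ j ∈ Finset.range x, eD j + ∑ j ∈ Finset.range x, eO j := by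
    rw [← Finset.sum_add_distrib]; exact c1
  linarith

lemma filter_chain_sum (m : ℕ) (hm : 0 < m) (g : Fin m → Fin m → ℝ) :
    ∑ p ∈ Finset.univ.filter
        (fun p : Fin m × Fin m => p.1 = p.2 ∨ p.1.val = p.2.val + 1), g p.1 p.2
    = (∑ j ∈ Finset.range m, g ⟨j % m, Nat.mod_lt _ hm⟩ ⟨j % m, Nat.mod_lt _ hm⟩)
      + ∑ j ∈ Finset.range (m-1), g ⟨(j+1) % m, Nat.mod_lt _ hm⟩ ⟨j % m, Nat.mod_lt _ hm⟩ := by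
  rw [Finset.sum_filter, Fintype.sum_prod_type]
  have hsplit : ∀ (x y : Fin m),
      (if x = y ∨ x.val = y.val + 1 then g x y else 0)
      = (if x = y then g x y else 0) + (if x.val = y.val + 1 then g x y else 0) := by
    intro x y
    by_cases h1 : x = y
    · have h2 : ¬ (x.val = y.val + 1) := by subst h1; omega
      simp [h1, h2]
    · by_cases h2 : x.val = y.val + 1 <;> simp [h1, h2]
  simp only [hsplit, Finset.sum_add_distrib]
  congr 1
  · have : ∀ x : Fin m, (∑ y : Fin m, if x = y then g x y else 0) = g x x := by
      intro x
      rw [Finset.sum_ite_eq]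
      simp
    simp only [this]
    rw [← Fin.sum_univ_eq_sum_range (fun j => g ⟨j % m, Nat.mod_lt _ hm⟩ ⟨j % m, Nat.mod_lt _ hm⟩) m]
    apply Finset.sum_congr rfl
    intro x _
    congr 1 <;> exact Fin.ext (by simp [Nat.mod_eq_of_lt x.isLt])
  · rw [Finset.sum_comm]
    have : ∀ y : Fin m, (∑ x : Fin m, if x.val = y.val + 1 then g x y else 0)
        = if y.val + 1 < m then g ⟨(y.val+1) % m, Nat.mod_lt _ hm⟩ ⟨y.val % m, Nat.mod_lt _ hm⟩ else 0 := by
      intro y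
      by_cases hy : y.val + 1 < m
      · rw [if_pos hy, Finset.sum_eq_single (⟨y.val + 1, hy⟩ : Fin m)]
        · rw [if_pos rfl]
          congr 1
          · exact Fin.ext (Nat.mod_eq_of_lt hy).symm
          · exact Fin.ext (Nat.mod_eq_of_lt y.isLt).symm
        · intro x _ hx
          rw [if_neg]
          intro hc
          exact hx (Fin.ext hc)
        · simp
      · rw [if_neg hy]
        apply Finset.sum_eq_zero
        intro x _
        rw [if_neg]
        intro hc
        exact hy (hc ▸ x.isLt)
    simp only [this]
    rw [Fin.sum_univ_eq_sum_range (fun j => if j + 1 < m then g ⟨(j+1) % m, Nat.mod_lt _ hm⟩ ⟨j % m, Nat.mod_lt _ hm⟩ else 0) m]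
    rw [show Finset.range m = Finset.range ((m-1)+1) from by congr 1; omega]
    rw [Finset.sum_range_succ]
    have hlast : ¬ ((m-1) + 1 < m) := by omega
    rw [if_neg hlast, add_zero]
    apply Finset.sum_congr rfl
    intro j hj
    rw [if_pos (by simp at hj; omega)]

lemma key_bound (m : ℕ) (hm : 2 ≤ m) {Z C : Type*} [Fintype Z] [Fintype C]
    (P : Fin m → Fin m → Z → Bool → Bool → C → ℝ)
    (hnonneg : ∀ x y z a b c, 0 ≤ P x y z a b c)
    (hNS_AC : ∀ x y y' z a c, ∑ b, P x y z a b c = ∑ b, P x y' z a b c)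
    (hNS_BC : ∀ x x' y z b c, ∑ a, P x y z a b c = ∑ a, P x' y z a b c)
    (hNS_C : ∀ x x' y y' z c, ∑ a, ∑ b, P x y z a b c = ∑ a, ∑ b, P x' y' z a b c)
    (x y : Fin m) (z : Z) (c : C) :
      |2 * (∑ b, P x y z true b c) - ∑ a, ∑ b, P x y z a b c| ≤
        (∑ p ∈ Finset.univ.filter
            (fun p : Fin m × Fin m => p.1 = p.2 ∨ p.1.val = p.2.val + 1),
          (P p.1 p.2 z true false c + P p.1 p.2 z false true c))
        + (P ⟨0, Nat.lt_of_lt_of_le Nat.zero_lt_two hm⟩ ⟨m - 1, Nat.sub_lt (Nat.lt_of_lt_of_le Nat.zero_lt_two hm) Nat.one_pos⟩ z true true c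
           + P ⟨0, Nat.lt_of_lt_of_le Nat.zero_lt_two hm⟩ ⟨m - 1, Nat.sub_lt (Nat.lt_of_lt_of_le Nat.zero_lt_two hm) Nat.one_pos⟩ z false false c) := by
  have hm0 : 0 < m := by omega
  set F : ℕ → Fin m := fun j => ⟨j % m, Nat.mod_lt _ hm0⟩ with hF
  set g : Fin m → Fin m → ℝ :=
    fun u v => P u v z true false c + P u v z false true c with hg
  set a' : ℕ → ℝ := fun j => ∑ b, P (F j) (F j) z true b c with ha'
  set b' : ℕ → ℝ := fun j => ∑ a, P (F j) (F j) z a true c with hb'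
  have hF0 : F 0 = (⟨0, by omega⟩ : Fin m) := by
    apply Fin.ext; simp [hF]
  have hFm : F (m-1) = (⟨m - 1, by omega⟩ : Fin m) := by
    apply Fin.ext; simp [hF, Nat.mod_eq_of_lt (by omega : m - 1 < m)]
  have h1 : ∀ j, j < m → |a' j - b' j| ≤ g (F j) (F j) := by
    intro j _
    have e1 : a' j - b' j = P (F j) (F j) z true false c - P (F j) (F j) z false true c := by
      simp only [ha', hb', Fintype.sum_bool]; ring
    rw [e1, hg]
    have := hnonneg (F j) (F j) z true false c
    have := hnonneg (F j) (F j) z false true c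
    exact abs_le.mpr ⟨by dsimp only; linarith, by dsimp only; linarith⟩
  have h2 : ∀ j, j + 1 < m → |a' (j+1) - b' j| ≤ g (F (j+1)) (F j) := by
    intro j _
    have eA : a' (j+1) = ∑ b, P (F (j+1)) (F j) z true b c := hNS_AC _ _ _ _ _ _
    have eB : b' j = ∑ a, P (F (j+1)) (F j) z a true c := hNS_BC _ _ _ _ _ _
    have e1 : a' (j+1) - b' j
        = P (F (j+1)) (F j) z true false c - P (F (j+1)) (F j) z false true c := by
      rw [eA, eB]; simp only [Fintype.sum_bool]; ring
    rw [e1, hg]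
    have := hnonneg (F (j+1)) (F j) z true false c
    have := hnonneg (F (j+1)) (F j) z false true c
    exact abs_le.mpr ⟨by dsimp only; linarith, by dsimp only; linarith⟩
  have h3 : |a' 0 + b' (m-1) - ∑ a, ∑ b, P x y z a b c| ≤
      P (F 0) (F (m-1)) z true true c + P (F 0) (F (m-1)) z false false c := by
    have eA : a' 0 = ∑ b, P (F 0) (F (m-1)) z true b c := hNS_AC _ _ _ _ _ _
    have eB : b' (m-1) = ∑ a, P (F 0) (F (m-1)) z a true c := hNS_BC _ _ _ _ _ _
    have eN : ∑ a, ∑ b, P x y z a b c = ∑ a, ∑ b, P (F 0) (F (m-1)) z a b c :=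
      hNS_C _ _ _ _ _ _
    have e1 : a' 0 + b' (m-1) - ∑ a, ∑ b, P x y z a b c
        = P (F 0) (F (m-1)) z true true c - P (F 0) (F (m-1)) z false false c := by
      rw [eA, eB, eN]; simp only [Fintype.sum_bool]; ring
    rw [e1]
    have := hnonneg (F 0) (F (m-1)) z true true c
    have := hnonneg (F 0) (F (m-1)) z false false c
    exact abs_le.mpr ⟨by linarith, by linarith⟩
  have main := chain_bound m hm0 a' b' (fun j => g (F j) (F j)) (fun j => g (F (j+1)) (F j))
      (P (F 0) (F (m-1)) z true true c + P (F 0) (F (m-1)) z false false c)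
      (∑ a, ∑ b, P x y z a b c) h1 h2 h3 x.val x.isLt
  have hax : a' x.val = ∑ b, P x y z true b c := by
    have hFx : F x.val = x := by apply Fin.ext; simp [hF, Nat.mod_eq_of_lt x.isLt]
    rw [ha']; dsimp only; rw [hFx]; exact hNS_AC _ _ _ _ _ _
  rw [hax] at main
  have hfs := filter_chain_sum m hm0 g
  rw [hfs]
  rw [hF0, hFm] at main
  exact main

lemma tv1 {C : Type*} [Fintype C] (M Nc J : C → ℝ) (I : ℝ)
    (hJ : ∀ c, |2 * M c - Nc c| ≤ J c) (hJsum : ∑ c, J c = I) :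
    (1/2) * ∑ c, (|M c - (1/2) * Nc c| + |Nc c - M c - (1/2) * Nc c|) ≤ I / 2 := by
  have hpt : ∀ c, |M c - (1/2) * Nc c| + |Nc c - M c - (1/2) * Nc c| ≤ J c := by
    intro c
    have e1 : M c - (1/2) * Nc c = (2 * M c - Nc c) / 2 := by ring
    have e2 : Nc c - M c - (1/2) * Nc c = -((2 * M c - Nc c) / 2) := by ring
    rw [e1, e2, abs_neg, abs_div]
    have := hJ c
    simp only [abs_two]
    linarith
  have := Finset.sum_le_sum (fun c (_ : c ∈ Finset.univ) => hpt c)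
  rw [hJsum] at this
  linarith

lemma tv2 {C : Type*} [Fintype C] (M Nc J : C → ℝ) (I : ℝ)
    (hM0 : ∀ c, 0 ≤ M c) (hMle : ∀ c, M c ≤ Nc c)
    (hJ : ∀ c, |2 * M c - Nc c| ≤ J c)
    (hJnn : ∀ c, 0 ≤ J c)
    (hNsum : ∑ c, Nc c = 1)
    (hJsum : ∑ c, J c = I)
    (hp : 0 < ∑ c, M c) :
    (1/2) * ∑ c, |M c / (∑ c', M c') - Nc c| ≤ I := by
  set p := ∑ c, M c with hpdef
  have h2p : (0:ℝ) < 2 * p := by linarith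
  set ε := 2 * p - 1 with hε
  set T : C → ℝ := fun c => (2 * M c - Nc c) - ε * Nc c with hT
  have hTsum : ∑ c, T c = 0 := by
    have h1 : ∑ c, T c = (∑ c, (2 * M c - Nc c)) - ε * ∑ c, Nc c := by
      rw [Finset.mul_sum, ← Finset.sum_sub_distrib]
    have h2 : ∑ c, (2 * M c - Nc c) = 2 * p - 1 := by
      rw [Finset.sum_sub_distrib, hNsum, ← Finset.mul_sum, ← hpdef]
    rw [h1, h2, hNsum, hε]
    ring
  have hd2 : ∀ c, -(Nc c) ≤ 2 * M c - Nc c := fun c => by have := hM0 c; linarith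
  have hd3 : ∀ c, 2 * M c - Nc c ≤ Nc c := fun c => by have := hMle c; linarith
  have hNnn : ∀ c, 0 ≤ Nc c := fun c => le_trans (hM0 c) (hMle c)
  have hTb : ∑ c, |T c| ≤ 4 * p * I := by
    rcases le_or_gt 0 ε with hsgn | hsgn
    · have hptw : ∀ c, max (T c) 0 ≤ (2 * p) * J c := by
        intro c
        rcases le_or_gt (T c) 0 with h | h
        · rw [max_eq_right h]; exact mul_nonneg (by linarith) (hJnn c)
        · rw [max_eq_left h.le]
          have hd1 : 2 * M c - Nc c ≤ J c := le_of_abs_le (hJ c)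
          have hq1 : 0 ≤ ε * ((2 * M c - Nc c) + Nc c) :=
            mul_nonneg hsgn (by have := hd2 c; linarith)
          have hq2 : ε * (2 * M c - Nc c) ≤ ε * J c :=
            mul_le_mul_of_nonneg_left hd1 hsgn
          simp only [hT]
          rw [show (2:ℝ) * p * J c = (1 + ε) * J c from by rw [hε]; ring]
          nlinarith [hq1, hq2, hd1]
      have habs : ∀ x : ℝ, |x| = 2 * max x 0 - x := by
        intro x
        rcases le_or_gt 0 x with h | h
        · rw [abs_of_nonneg h, max_eq_left h]; ring
        · rw [abs_of_neg h, max_eq_right h.le]; ring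
      calc ∑ c, |T c| = ∑ c, (2 * max (T c) 0 - T c) := by simp only [habs]
        _ = 2 * (∑ c, max (T c) 0) - ∑ c, T c := by
            rw [Finset.sum_sub_distrib, Finset.mul_sum]
        _ = 2 * ∑ c, max (T c) 0 := by rw [hTsum]; ring
        _ ≤ 2 * ∑ c, (2 * p) * J c := by
            have := Finset.sum_le_sum (fun c (_ : c ∈ Finset.univ) => hptw c)
            linarith
        _ = 4 * p * I := by rw [← Finset.mul_sum, hJsum]; ring
    · have hptw : ∀ c, max (-(T c)) 0 ≤ (2 * p) * J c := by
        intro c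
        rcases le_or_gt (-(T c)) 0 with h | h
        · rw [max_eq_right h]; exact mul_nonneg (by linarith) (hJnn c)
        · rw [max_eq_left h.le]
          have hd1 : -(2 * M c - Nc c) ≤ J c := by
            have := abs_le.mp (hJ c); linarith [this.1]
          have hq1 : ε * ((2 * M c - Nc c) + Nc c) ≤ 0 :=
            mul_nonpos_of_nonpos_of_nonneg hsgn.le (by have := hd2 c; linarith)
          have hq2 : (1 + ε) * (-(2 * M c - Nc c)) ≤ (1 + ε) * J c :=
            mul_le_mul_of_nonneg_left hd1 (by rw [hε]; linarith)
          simp only [hT] at h ⊢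
          rw [show (2:ℝ) * p * J c = (1 + ε) * J c from by rw [hε]; ring]
          nlinarith [hq1, hq2, hd1]
      have habs : ∀ x : ℝ, |x| = 2 * max (-x) 0 + x := by
        intro x
        rcases le_or_gt 0 x with h | h
        · rw [abs_of_nonneg h, max_eq_right (by linarith : -x ≤ 0)]; ring
        · rw [abs_of_neg h, max_eq_left (by linarith : 0 ≤ -x)]; ring
      calc ∑ c, |T c| = ∑ c, (2 * max (-(T c)) 0 + T c) := by simp only [habs]
        _ = 2 * (∑ c, max (-(T c)) 0) + ∑ c, T c := by
            rw [Finset.sum_add_distrib, Finset.mul_sum]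
        _ = 2 * ∑ c, max (-(T c)) 0 := by rw [hTsum]; ring
        _ ≤ 2 * ∑ c, (2 * p) * J c := by
            have := Finset.sum_le_sum (fun c (_ : c ∈ Finset.univ) => hptw c)
            linarith
        _ = 4 * p * I := by rw [← Finset.mul_sum, hJsum]; ring
  have hrw : ∀ c, |M c / p - Nc c| = |T c| / (2 * p) := by
    intro c
    have e : M c / p - Nc c = T c / (2 * p) := by
      field_simp [hT]
      ring
    rw [e, abs_div, abs_of_pos h2p]
  calc (1/2) * ∑ c, |M c / p - Nc c| = (1/2) * ((∑ c, |T c|) / (2 * p)) := by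
        rw [show (∑ c, |T c|) / (2*p) = ∑ c, |T c| / (2*p) from Finset.sum_div _ _ _]
        simp only [hrw]
    _ ≤ I := by
        have hfin : (∑ c, |T c|) / (2 * p) ≤ 2 * I := by
          rw [div_le_iff₀ h2p]
          nlinarith [hTb]
        linarith [hfin]

/-- **Security from the chained Bell inequality under full no-signaling** (BHK/BCK).
For any fully no-signaling tripartite box (Alice and Bob with `m` inputs and binary
outputs, Eve with inputs `Z` and outputs `C`), the total variation distance of the
Alice–Eve joint distribution from the product of the uniform distribution on Alice's
output with Eve's marginal is at most `I/2`, and Eve's conditional distribution given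
Alice's output is `I`-close to her marginal, where `I` is the chained Bell expression
of the Alice–Bob marginal box. -/
theorem chained_bell_security_no_signaling
    (m : ℕ) (hm : 2 ≤ m) {Z C : Type*} [Fintype Z] [Fintype C] (z₀ : Z)
    (P : Fin m → Fin m → Z → Bool → Bool → C → ℝ)
    (hnonneg : ∀ x y z a b c, 0 ≤ P x y z a b c)
    (hsum : ∀ x y z, ∑ a, ∑ b, ∑ c, P x y z a b c = 1)
    -- full tripartite no-signaling constraints
    (hNS_AB : ∀ x y z z' a b, ∑ c, P x y z a b c = ∑ c, P x y z' a b c)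
    (hNS_AC : ∀ x y y' z a c, ∑ b, P x y z a b c = ∑ b, P x y' z a b c)
    (hNS_BC : ∀ x x' y z b c, ∑ a, P x y z a b c = ∑ a, P x' y z a b c)
    (hNS_A : ∀ x y y' z z' a, ∑ b, ∑ c, P x y z a b c = ∑ b, ∑ c, P x y' z' a b c)
    (hNS_B : ∀ x x' y z z' b, ∑ a, ∑ c, P x y z a b c = ∑ a, ∑ c, P x' y z' a b c)
    (hNS_C : ∀ x x' y y' z c, ∑ a, ∑ b, P x y z a b c = ∑ a, ∑ b, P x' y' z a b c)
    -- the chained Bell expression of the Alice–Bob marginal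
    (I : ℝ)
    (hI : I =
      (∑ p ∈ Finset.univ.filter
          (fun p : Fin m × Fin m => p.1 = p.2 ∨ p.1.val = p.2.val + 1),
        ∑ c, (P p.1 p.2 z₀ true false c + P p.1 p.2 z₀ false true c))
      + ∑ c, (P ⟨0, by omega⟩ ⟨m - 1, by omega⟩ z₀ true true c
              + P ⟨0, by omega⟩ ⟨m - 1, by omega⟩ z₀ false false c)) :
    -- (1) D(P_{A,C|x,y,z}, Pᵘ_A × P_{C|z}) ≤ I/2
    (∀ x y z,
      (1 / 2) * ∑ a, ∑ c,
          |(∑ b, P x y z a b c) - (1 / 2) * (∑ a', ∑ b, P x y z a' b c)| ≤ I / 2) ∧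
    -- (2) D(P_{C|x,y,z,a}, P_{C|z}) ≤ I whenever P_{A|X}(a|x) > 0
    (∀ a x y z, 0 < (∑ b, ∑ c, P x y z a b c) →
      (1 / 2) * ∑ c,
          |(∑ b, P x y z a b c) / (∑ b, ∑ c', P x y z a b c')
            - ∑ a', ∑ b, P x y z a' b c| ≤ I) := by
  have hkey : ∀ (x y : Fin m) (z : Z) (c : C),
      |2 * (∑ b, P x y z true b c) - ∑ a, ∑ b, P x y z a b c| ≤ Jfun m hm P z c :=
    fun x y z c => key_bound m hm P hnonneg hNS_AC hNS_BC hNS_C x y z c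
  have hJnn : ∀ (z : Z) (c : C), 0 ≤ Jfun m hm P z c := by
    intro z c
    apply add_nonneg
    · exact Finset.sum_nonneg fun p _ =>
        add_nonneg (hnonneg _ _ _ _ _ _) (hnonneg _ _ _ _ _ _)
    · exact add_nonneg (hnonneg _ _ _ _ _ _) (hnonneg _ _ _ _ _ _)
  have hab : ∀ (x y : Fin m) (z : Z) (a b a' b' : Bool),
      ∑ c, (P x y z a b c + P x y z a' b' c)
        = ∑ c, (P x y z₀ a b c + P x y z₀ a' b' c) := by
    intro x y z a b a' b'
    rw [Finset.sum_add_distrib, Finset.sum_add_distrib,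
      hNS_AB x y z z₀ a b, hNS_AB x y z z₀ a' b']
  have hJsum : ∀ z : Z, ∑ c, Jfun m hm P z c = I := by
    intro z
    unfold Jfun
    rw [Finset.sum_add_distrib, Finset.sum_comm, hI]
    congr 1
    · exact Finset.sum_congr rfl fun p _ => hab p.1 p.2 z _ _ _ _
    · exact hab _ _ z _ _ _ _
  constructor
  · intro x y z
    have h := tv1 (fun c => ∑ b, P x y z true b c)
      (fun c => ∑ a', ∑ b, P x y z a' b c) (Jfun m hm P z) I
      (fun c => hkey x y z c) (hJsum z)
    refine le_trans (le_of_eq ?_) h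
    rw [Fintype.sum_bool, ← Finset.sum_add_distrib]
    congr 1
    apply Finset.sum_congr rfl
    intro c _
    congr 2
    rw [show (∑ b, P x y z false b c)
        = (∑ a', ∑ b, P x y z a' b c) - ∑ b, P x y z true b c from by
      simp only [Fintype.sum_bool]; ring]
  · intro a x y z hp
    have e : (∑ b, ∑ c', P x y z a b c') = ∑ c', ∑ b, P x y z a b c' :=
      Finset.sum_comm
    rw [e] at hp ⊢
    have hM0 : ∀ c, 0 ≤ ∑ b, P x y z a b c :=
      fun c => Finset.sum_nonneg fun b _ => hnonneg _ _ _ _ _ _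
    have hMle : ∀ c, (∑ b, P x y z a b c) ≤ ∑ a', ∑ b, P x y z a' b c := by
      intro c
      have n1 := hnonneg x y z true true c
      have n2 := hnonneg x y z true false c
      have n3 := hnonneg x y z false true c
      have n4 := hnonneg x y z false false c
      cases a <;> simp only [Fintype.sum_bool] <;> linarith
    have hJ : ∀ c, |2 * (∑ b, P x y z a b c) - ∑ a', ∑ b, P x y z a' b c|
        ≤ Jfun m hm P z c := by
      intro c
      cases a
      · have h := hkey x y z c
        have e2 : 2 * (∑ b, P x y z false b c) - (∑ a', ∑ b, P x y z a' b c)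
            = -(2 * (∑ b, P x y z true b c) - ∑ a', ∑ b, P x y z a' b c) := by
          simp only [Fintype.sum_bool]; ring
        rw [e2, abs_neg]
        exact h
      · exact hkey x y z c
    have hNsum : ∑ c, ∑ a', ∑ b, P x y z a' b c = 1 := by
      rw [Finset.sum_comm]
      rw [show ∑ a', ∑ c, ∑ b, P x y z a' b c = ∑ a', ∑ b, ∑ c, P x y z a' b c
        from Finset.sum_congr rfl fun a' _ => Finset.sum_comm]
      exact hsum x y z
    exact tv2 (fun c => ∑ b, P x y z a b c) (fun c => ∑ a', ∑ b, P x y z a' b c)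
      (Jfun m hm P z) I hM0 hMle hJ (hJnn z) hNsum (hJsum z) hp
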